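/- arXiv:1205.1221 — 7 statements merged into one kernel-verified Lean document; each statement's English description precedes it below -/
import Mathlib

section
/- Let A be the 2-dimensional commutative algebra over K (char K ≠ 2) with e₁e₁ = e₁, e₂e₂ = e₂, e₁e₂ = e₂e₁ = ½(e₁+e₂). Then for every a ∈ K, the element a e₁ + (1-a) e₂ is idempotent; hence A has infinitely many idempotents when K is infinite. -/
/-- The commutative multiplication on `K²` with `e₁e₁ = e₁`, `e₂e₂ = e₂`,
`e₁e₂ = e₂e₁ = ½(e₁ + e₂)`. -/
def mulHalf {K : Type*} [Field K] (x y : K × K) : K × K :=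
  (x.1 * y.1 + (x.1 * y.2 + x.2 * y.1) * (1/2 : K),
   x.2 * y.2 + (x.1 * y.2 + x.2 * y.1) * (1/2 : K))

/-- Every `a e₁ + (1-a) e₂` is idempotent; hence there are infinitely many idempotents
when `K` is infinite. -/
theorem stmt_5 (K : Type*) [Field K] (h2 : (2 : K) ≠ 0) :
    (∀ a : K, mulHalf (a, 1 - a) (a, 1 - a) = (a, 1 - a)) ∧
      (Infinite K → {v : K × K | mulHalf v v = v}.Infinite) := by
  have key : ∀ a : K, mulHalf (a, 1 - a) (a, 1 - a) = (a, 1 - a) := by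
    intro a
    simp only [mulHalf, Prod.mk.injEq]
    constructor <;> field_simp <;> ring
  refine ⟨key, fun hK => ?_⟩
  have hinj : Function.Injective (fun a : K => ((a, 1 - a) : K × K)) := by
    intro a b hab
    exact (Prod.mk.injEq _ _ _ _ ▸ hab).1
  exact Set.infinite_of_injective_forall_mem hinj (fun a => key a)
end

section
/- Let A be the 2-dimensional commutative algebra over an algebraically closed field K (char K ≠ 2) with e₁e₁ = e₂ and e₁e₂ = e₂e₁ = α e₁ + β e₂, e₂e₂ = 0, where α ≠ 0. Then A contains a nonzero idempotent element. -/
/-- The commutative multiplication on `K²` with `e₁e₁ = e₂`,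
`e₁e₂ = e₂e₁ = α e₁ + β e₂`, `e₂e₂ = 0`. -/
def mul17 {K : Type*} [Field K] (α β : K) (x y : K × K) : K × K :=
  ((x.1 * y.2 + x.2 * y.1) * α, x.1 * y.1 + (x.1 * y.2 + x.2 * y.1) * β)

/-- Over an algebraically closed field of characteristic ≠ 2, if `α ≠ 0` then the
algebra contains a nonzero idempotent. -/
theorem stmt_7 (K : Type*) [Field K] [IsAlgClosed K] (h2 : (2 : K) ≠ 0)
    (α β : K) (hα : α ≠ 0) :
    ∃ v : K × K, v ≠ 0 ∧ mul17 α β v v = v := by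
  -- solve x^2 + (β/α) x - 1/(2α) = 0
  obtain ⟨x, hx⟩ := IsAlgClosed.exists_root
    (Polynomial.X ^ 2 + Polynomial.C (β / α) * Polynomial.X - Polynomial.C (1 / (2 * α)))
    (by
      have : (Polynomial.X ^ 2 + Polynomial.C (β / α) * Polynomial.X
          - Polynomial.C (1 / (2 * α)) : Polynomial K).degree = 2 := by
        compute_degree!
      intro h0
      rw [this] at h0
      exact (by norm_num : (2 : WithBot ℕ) ≠ 0) h0)
  have hx' : x ^ 2 + (β / α) * x - 1 / (2 * α) = 0 := by
    simpa using hx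
  refine ⟨(x, 1 / (2 * α)), ?_, ?_⟩
  · intro h
    have hx0 : x = 0 := congrArg Prod.fst h
    rw [hx0] at hx'
    field_simp at hx'
    norm_num at hx'
  · have h2α : 2 * α ≠ 0 := mul_ne_zero h2 hα
    simp only [mul17, Prod.mk.injEq]
    constructor
    · field_simp
      ring
    · field_simp at hx' ⊢
      have h3 : α * (x ^ 2 * α * 2 + β * x * 2 - 1) = α * 0 := by linear_combination α * hx'
      have hx'' := mul_left_cancel₀ hα h3
      linear_combination hx''
end

section
/- Let A be the 2-dimensional commutative algebra over a field K with e₁e₁ = e₂, e₁e₂ = e₂e₁ = β e₂, e₂e₂ = 0 (i.e., α₂ = 0 in the family). Then A has no nonzero idempotent element. -/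
/-- The commutative multiplication on `K²` with `e₁e₁ = e₂`, `e₁e₂ = e₂e₁ = β e₂`,
`e₂e₂ = 0`. -/
def mul18 {K : Type*} [Field K] (β : K) (x y : K × K) : K × K :=
  (0, x.1 * y.1 + (x.1 * y.2 + x.2 * y.1) * β)

/-- This algebra has no nonzero idempotent. -/
theorem stmt_8 (K : Type*) [Field K] (β : K) (v : K × K)
    (hidem : mul18 β v v = v) : v = 0 := by
  obtain ⟨a, b⟩ := v
  simp only [mul18, Prod.mk.injEq, Prod.ext_iff] at *
  obtain ⟨h1, h2⟩ := hidem
  subst h1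
  constructor
  · rfl
  · simpa using h2.symm
end

section
/- In a Jordan algebra A over a field of characteristic ≠ 2, if v₁ and v₂ are idempotent elements, then (v₁v₂)((v₁+v₂)w) = (v₁+v₂)((v₁v₂)w) for every w ∈ A. -/
/-- In a Jordan algebra over a field of characteristic ≠ 2, if `v₁` and `v₂` are
idempotent then `(v₁v₂)((v₁+v₂)w) = (v₁+v₂)((v₁v₂)w)` for all `w`. -/
theorem stmt_9 (K : Type*) [Field K] (h2 : (2 : K) ≠ 0)
    (A : Type*) [AddCommGroup A] [Module K A]
    (mul : A →ₗ[K] A →ₗ[K] A) (hcomm : ∀ x y : A, mul x y = mul y x)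
    (hjordan : ∀ v w : A, mul (mul v w) (mul v v) = mul v (mul w (mul v v)))
    (v₁ v₂ : A) (h₁ : mul v₁ v₁ = v₁) (h₂ : mul v₂ v₂ = v₂) :
    ∀ w : A, mul (mul v₁ v₂) (mul (v₁ + v₂) w) = mul (v₁ + v₂) (mul (mul v₁ v₂) w) := by
  -- first linearization (in the cubic variable, once)
  have lin1 : ∀ a b w : A,
      mul (mul b w) (mul a a) + mul (mul a w) (mul a b) + mul (mul a w) (mul b a)
        + mul (mul b w) (mul b b)
      = mul b (mul w (mul a a)) + mul a (mul w (mul a b)) + mul a (mul w (mul b a))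
        + mul b (mul w (mul b b)) := by
    intro a b w
    have H1 := hjordan (a + b) w
    have H2 := hjordan (a - b) w
    simp only [map_add, map_sub, LinearMap.add_apply, LinearMap.sub_apply] at H1 H2
    apply smul_right_injective A h2
    linear_combination (norm := module) H1 - H2
  -- second linearization
  have fullLin : ∀ a₁ a₂ b w : A,
      mul (mul b w) (mul a₁ a₂) + mul (mul b w) (mul a₂ a₁)
        + mul (mul a₁ w) (mul a₂ b) + mul (mul a₂ w) (mul a₁ b)
        + mul (mul a₁ w) (mul b a₂) + mul (mul a₂ w) (mul b a₁)
        - mul (mul b w) (mul b b)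
      = mul b (mul w (mul a₁ a₂)) + mul b (mul w (mul a₂ a₁))
        + mul a₁ (mul w (mul a₂ b)) + mul a₂ (mul w (mul a₁ b))
        + mul a₁ (mul w (mul b a₂)) + mul a₂ (mul w (mul b a₁))
        - mul b (mul w (mul b b)) := by
    intro a₁ a₂ b w
    have G1 := lin1 (a₁ + a₂) b w
    have G2 := lin1 a₁ b w
    have G3 := lin1 a₂ b w
    simp only [map_add, LinearMap.add_apply] at G1
    linear_combination (norm := module) G1 - G2 - G3
  intro w
  have F1 := fullLin v₁ v₂ v₁ w
  have F2 := fullLin v₁ v₂ v₂ w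
  simp only [hcomm v₂ v₁, h₁, h₂] at F1 F2
  simp only [hcomm (mul v₁ w) (mul v₁ v₂), hcomm (mul v₂ w) (mul v₁ v₂),
    hcomm w (mul v₁ v₂), hcomm (mul v₂ w) v₁, hcomm (mul v₁ w) v₂,
    hcomm w v₁, hcomm w v₂, hcomm (mul v₁ w) v₁, hcomm (mul v₂ w) v₂] at F1 F2
  simp only [map_add, LinearMap.add_apply]
  have h4 : (4 : K) ≠ 0 := by
    rw [show (4 : K) = 2 * 2 by norm_num]; exact mul_ne_zero h2 h2
  apply smul_right_injective A h4
  linear_combination (norm := module) F1 + F2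
end

section
/- Let A be a 2-dimensional Jordan algebra over a field of characteristic ≠ 2 containing idempotents v₁, v₂ such that v₁v₂ and v₁+v₂ are linearly independent. Then A is associative. -/
/-- A 2-dimensional Jordan algebra (char K ≠ 2) containing idempotents `v₁, v₂` such
that `v₁v₂` and `v₁+v₂` are linearly independent is associative. -/
theorem stmt_10 (K : Type*) [Field K] (h2 : (2 : K) ≠ 0)
    (A : Type*) [AddCommGroup A] [Module K A] (hdim : Module.finrank K A = 2)
    (mul : A →ₗ[K] A →ₗ[K] A) (hcomm : ∀ x y : A, mul x y = mul y x)
    (hjordan : ∀ v w : A, mul (mul v w) (mul v v) = mul v (mul w (mul v v)))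
    (v₁ v₂ : A) (h₁ : mul v₁ v₁ = v₁) (h₂ : mul v₂ v₂ = v₂)
    (hind : LinearIndependent K ![mul v₁ v₂, v₁ + v₂]) :
    ∀ x y z : A, mul x (mul y z) = mul (mul x y) z := by
  set u : A := mul v₁ v₂ with hu
  set s : A := v₁ + v₂ with hs
  -- every element is a combination of u and s
  have hspan : ∀ x : A, ∃ a b : K, x = a • u + b • s := by
    have htop := hind.span_eq_top_of_card_eq_finrank (by simp [hdim])
    intro x
    have hx : x ∈ Submodule.span K (Set.range ![u, s]) := htop ▸ Submodule.mem_top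
    rw [Submodule.mem_span_range_iff_exists_fun] at hx
    obtain ⟨c, hc⟩ := hx
    refine ⟨c 0, c 1, ?_⟩
    rw [← hc, Fin.sum_univ_two]
    simp
  -- coefficient extraction
  have key : ∀ a b c d : K, a • u + b • s = c • u + d • s → a = c ∧ b = d := by
    intro a b c d h
    have h0 : ∑ i, (![a - c, b - d]) i • (![u, s]) i = 0 := by
      rw [Fin.sum_univ_two]
      simp only [Matrix.cons_val_zero, Matrix.cons_val_one, Matrix.head_cons]
      rw [sub_smul, sub_smul]
      rw [show a • u - c • u + (b • s - d • s) = (a • u + b • s) - (c • u + d • s) by abel, h]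
      abel
    have := (Fintype.linearIndependent_iff.mp hind) _ h0
    have e0 := this 0
    have e1 := this 1
    simp only [Matrix.cons_val_zero, Matrix.cons_val_one, Matrix.head_cons] at e0 e1
    exact ⟨sub_eq_zero.mp e0, sub_eq_zero.mp e1⟩
  -- structure constants
  have hsu : mul s u = mul u s := hcomm s u
  have hss : mul s s = (2 : K) • u + s := by
    rw [hs]
    simp only [map_add, LinearMap.add_apply]
    rw [h₁, h₂, hcomm v₂ v₁, ← hu]
    rw [two_smul]
    abel
  obtain ⟨p, q, hpq⟩ := hspan (mul u u)
  obtain ⟨r, t, hrt⟩ := hspan (mul u s)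
  -- Jordan identity instances give relations among structure constants
  have J1 := hjordan s u
  simp only [hsu, hss, hrt, hpq, map_add, map_smul, LinearMap.add_apply,
    LinearMap.smul_apply, smul_add, smul_smul] at J1
  have J1' : (2*r*p + (r + 2*t)*r + 2*t) • u + (2*r*q + (r + 2*t)*t + t) • s
      = ((2*p + r)*r + 2*(2*q + t)) • u + ((2*p + r)*t + (2*q + t)) • s := by
    linear_combination (norm := module) J1
  obtain ⟨e1u, e1s⟩ := key _ _ _ _ J1'
  have J2 := hjordan s s
  simp only [hsu, hss, hrt, hpq, map_add, map_smul, LinearMap.add_apply,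
    LinearMap.smul_apply, smul_add, smul_smul] at J2
  have J2' : (2*2*p + (2 + 2)*r + 2) • u + (2*2*q + (2 + 2)*t + 1) • s
      = ((2*r + 2)*r + 2*(2*t + 1)) • u + ((2*r + 2)*t + (2*t + 1)) • s := by
    linear_combination (norm := module) J2
  obtain ⟨e2u, e2s⟩ := key _ _ _ _ J2'
  have R1 : 2*q = r*t := by
    have h' : 2*(2*q) = 2*(r*t) := by linear_combination -e1u
    exact mul_left_cancel₀ h2 h'
  have R2 : p*t + q = r*q + t^2 := by
    have h' : 2*(p*t + q) = 2*(r*q + t^2) := by linear_combination -e1s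
    exact mul_left_cancel₀ h2 h'
  have R3 : r + 2*p = r^2 + 2*t := by
    have h' : 2*(r + 2*p) = 2*(r^2 + 2*t) := by linear_combination e2u
    exact mul_left_cancel₀ h2 h'
  -- associativity on basis triples
  have Auus : mul (mul u u) s = mul u (mul u s) := by
    rw [hpq, hrt]
    simp only [map_add, map_smul, LinearMap.add_apply, LinearMap.smul_apply]
    rw [hpq, hrt, hss]
    linear_combination (norm := module) R1 • u + R2 • s
  have Auss : mul (mul u s) s = mul u (mul s s) := by
    rw [hrt, hss]
    simp only [map_add, map_smul, LinearMap.add_apply, LinearMap.smul_apply]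
    rw [hpq, hrt, hss]
    linear_combination (norm := module) (-R3) • u + (-R1) • s
  have Auuu : mul (mul u u) u = mul u (mul u u) := hcomm _ _
  have Asss : mul (mul s s) s = mul s (mul s s) := hcomm _ _
  have Ausu : mul (mul u s) u = mul u (mul s u) := by
    rw [hcomm s u]; exact hcomm _ _
  have Asus : mul (mul s u) s = mul s (mul u s) := by
    rw [hcomm s u]; exact hcomm _ _
  have Asuu : mul (mul s u) u = mul s (mul u u) := by
    rw [hcomm s u, hcomm (mul u s) u, ← Auus]; exact hcomm _ _
  have Assu : mul (mul s s) u = mul s (mul s u) := by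
    rw [hcomm (mul s s) u, ← Auss, hcomm (mul u s) s, hcomm u s]
  -- general associativity by bilinearity
  intro x y z
  obtain ⟨x1, x2, hx⟩ := hspan x
  obtain ⟨y1, y2, hy⟩ := hspan y
  obtain ⟨z1, z2, hz⟩ := hspan z
  rw [hx, hy, hz]
  simp only [map_add, map_smul, LinearMap.add_apply, LinearMap.smul_apply,
    Auuu, Auus, Ausu, Auss, Asuu, Asus, Assu, Asss]
  try module
end

section
/- The 2-dimensional commutative algebra over K (char K ≠ 2) with e₁e₁ = e₁, e₁e₂ = e₂e₁ = β e₂, e₂e₂ = 0 satisfies the Jordan identity if and only if β ∈ {0, 1, 1/2}. (In particular for β = 1 and β = 0 it is a Jordan algebra.) -/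
/-- The multiplication `e₁e₁ = e₁`, `e₁e₂ = e₂e₁ = β e₂`, `e₂e₂ = 0` on `K²`. -/
def mul16 {K : Type*} [Field K] (β : K) (x y : K × K) : K × K :=
  (x.1 * y.1, β * (x.1 * y.2 + x.2 * y.1))

/-- This algebra satisfies the Jordan identity iff `β ∈ {0, 1, 1/2}`. -/
theorem stmt_16 (K : Type*) [Field K] (h2 : (2 : K) ≠ 0) (β : K) :
    (∀ v w : K × K,
        mul16 β (mul16 β v w) (mul16 β v v) = mul16 β v (mul16 β w (mul16 β v v)))
      ↔ (β = 0 ∨ β = 1 ∨ β = 1/2) := by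
  constructor
  · intro h
    have := congrArg Prod.snd (h (1, 1) (1, 0))
    simp only [mul16] at this
    have hfac : β * (β - 1) * (2 * β - 1) = 0 := by linear_combination -this
    rcases mul_eq_zero.mp hfac with h' | h'
    · rcases mul_eq_zero.mp h' with h'' | h''
      · exact Or.inl h''
      · exact Or.inr (Or.inl (by linear_combination h''))
    · refine Or.inr (Or.inr ?_)
      field_simp
      linear_combination h'
  · rintro (rfl | rfl | rfl) v w <;>
      simp only [mul16, Prod.mk.injEq] <;> constructor <;> try ring
    · field_simp; ring
end

section
/- Consider the action of GL(2,F₂) on the set of 256 bilinear multiplications on F₂² given by (f·μ)(x,y) = f(μ(f⁻¹x, f⁻¹y)). The number of orbits of this action (i.e., the number of isomorphism classes of 2-dimensional F₂-algebras) is 52. -/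
/-- The set of bilinear multiplications on `F₂²` isomorphic to a given one. -/
def orbitOf (μ : (Fin 2 → ZMod 2) →ₗ[ZMod 2] (Fin 2 → ZMod 2) →ₗ[ZMod 2] (Fin 2 → ZMod 2)) :
    Set ((Fin 2 → ZMod 2) →ₗ[ZMod 2] (Fin 2 → ZMod 2) →ₗ[ZMod 2] (Fin 2 → ZMod 2)) :=
  {μ' | ∃ f : (Fin 2 → ZMod 2) ≃ₗ[ZMod 2] (Fin 2 → ZMod 2),
      ∀ x y, f (μ x y) = μ' (f x) (f y)}

set_option maxRecDepth 100000
set_option maxHeartbeats 2000000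

abbrev V2 := Fin 2 → ZMod 2
abbrev T2 := V2 →ₗ[ZMod 2] V2 →ₗ[ZMod 2] V2
abbrev C2 := Fin 2 → Fin 2 → V2

def std : Fin 2 → V2 := fun i j => if i = j then 1 else 0
def app (v : Fin 2 → V2) (x : V2) : V2 := x 0 • v 0 + x 1 • v 1
def bil (c : C2) (u v : V2) : V2 :=
  (u 0 * v 0) • c 0 0 + (u 0 * v 1) • c 0 1 + (u 1 * v 0) • c 1 0 + (u 1 * v 1) • c 1 1
def Ef (μ : T2) : C2 := fun i j => μ (std i) (std j)
def va : V2 := ![1,0]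
def vb : V2 := ![0,1]
def vc : V2 := ![1,1]
def LF : Fin 6 → ((Fin 2 → V2) × (Fin 2 → V2)) :=
  ![(![va,vb],![va,vb]), (![vb,va],![vb,va]), (![va,vc],![va,vc]),
   (![vc,vb],![vc,vb]), (![vb,vc],![vc,va]), (![vc,va],![vb,vc])]
def act (p q : Fin 2 → V2) (c : C2) : C2 :=
  fun i j => app p (bil c (app q (std i)) (app q (std j)))
def encV (v : V2) : Nat := (v 0).val + 2 * (v 1).val
def decV (n : Nat) : V2 := ![(n % 2 : Nat), ((n / 2) % 2 : Nat)]
def enc (c : C2) : Nat := encV (c 0 0) + 4 * encV (c 0 1) + 16 * encV (c 1 0) + 64 * encV (c 1 1)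
def dec (n : Nat) : C2 := ![![decV (n % 4), decV (n / 4 % 4)], ![decV (n / 16 % 4), decV (n / 64 % 4)]]

def tbl0 : List Nat := [0, 1, 2, 3, 4, 5, 6, 7, 8, 9, 10, 11, 12, 13, 14, 15, 16, 17, 18, 19, 20, 21, 22, 23, 24, 25, 26, 27, 28, 29, 30, 31, 32, 33, 34, 35, 36, 37, 38, 39, 40, 41, 42, 43, 44, 45, 46, 47, 48, 49, 50, 51, 52, 53, 54, 55, 56, 57, 58, 59, 60, 61, 62, 63, 64, 65, 66, 67, 68, 69, 70, 71, 72, 73, 74, 75, 76, 77, 78, 79, 80, 81, 82, 83, 84, 85, 86, 87, 88, 89, 90, 91, 92, 93, 94, 95, 96, 97, 98, 99, 100, 101, 102, 103, 104, 105, 106, 107, 108, 109, 110, 111, 112, 113, 114, 115, 116, 117, 118, 119, 120, 121, 122, 123, 124, 125, 126, 127, 128, 129, 130, 131, 132, 133, 134, 135, 136, 137, 138, 139, 140, 141, 142, 143, 144, 145, 146, 147, 148, 149, 150, 151, 152, 153, 154, 155, 156, 157, 158, 159, 160, 161, 162, 163, 164, 165, 166, 167, 168, 169, 170, 171, 172,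 173, 174, 175, 176, 177, 178, 179, 180, 181, 182, 183, 184, 185, 186, 187, 188, 189, 190, 191, 192, 193, 194, 195, 196, 197, 198, 199, 200, 201, 202, 203, 204, 205, 206, 207, 208, 209, 210, 211, 212, 213, 214, 215, 216, 217, 218, 219, 220, 221, 222, 223, 224, 225, 226, 227, 228, 229, 230, 231, 232, 233, 234, 235, 236, 237, 238, 239, 240, 241, 242, 243, 244, 245, 246, 247, 248, 249, 250, 251, 252, 253, 254, 255]
def tbl1 : List Nat := [0, 128, 64, 192, 32, 160, 96, 224, 16, 144, 80, 208, 48, 176, 112, 240, 8, 136, 72, 200, 40, 168, 104, 232, 24, 152, 88, 216, 56, 184, 120, 248, 4, 132, 68, 196, 36, 164, 100, 228, 20, 148, 84, 212, 52, 180, 116, 244, 12, 140, 76, 204, 44, 172, 108, 236, 28, 156, 92, 220, 60, 188, 124, 252, 2, 130, 66, 194, 34, 162, 98, 226, 18, 146, 82, 210, 50, 178, 114, 242, 10, 138, 74, 202, 42, 170, 106, 234, 26, 154, 90, 218, 58, 186, 122, 250, 6, 134, 70, 198, 38, 166, 102, 230, 22, 150, 86, 214, 54, 182, 118, 246, 14,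 142, 78, 206, 46, 174, 110, 238, 30, 158, 94, 222, 62, 190, 126, 254, 1, 129, 65, 193, 33, 161, 97, 225, 17, 145, 81, 209, 49, 177, 113, 241, 9, 137, 73, 201, 41, 169, 105, 233, 25, 153, 89, 217, 57, 185, 121, 249, 5, 133, 69, 197, 37, 165, 101, 229, 21, 149, 85, 213, 53, 181, 117, 245, 13, 141, 77, 205, 45, 173, 109, 237, 29, 157, 93, 221, 61, 189, 125, 253, 3, 131, 67, 195, 35, 163, 99, 227, 19, 147, 83, 211, 51, 179, 115, 243, 11, 139, 75, 203, 43, 171, 107, 235, 27, 155, 91, 219, 59, 187, 123, 251, 7, 135, 71, 199, 39, 167, 103, 231, 23, 151, 87, 215, 55, 183, 119, 247, 15, 143, 79, 207, 47, 175, 111, 239, 31, 159, 95, 223, 63, 191, 127, 255]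
def tbl2 : List Nat := [0, 85, 255, 170, 68, 17, 187, 238, 204, 153, 51, 102, 136, 221, 119, 34, 80, 5, 175, 250, 20, 65, 235, 190, 156, 201, 99, 54, 216, 141, 39, 114, 240, 165, 15, 90, 180, 225, 75, 30, 60, 105, 195, 150, 120, 45, 135, 210, 160, 245, 95, 10, 228, 177, 27, 78, 108, 57, 147, 198, 40, 125, 215, 130, 64, 21, 191, 234, 4, 81, 251, 174, 140, 217, 115, 38, 200, 157, 55, 98, 16, 69, 239, 186, 84, 1, 171, 254, 220, 137, 35, 118, 152, 205, 103, 50, 176, 229, 79, 26, 244, 161, 11, 94, 124, 41, 131, 214, 56, 109, 199, 146, 224, 181, 31, 74, 164, 241, 91, 14, 44, 121, 211, 134, 104, 61, 151, 194, 192, 149, 63, 106, 132, 209, 123, 46, 12, 89, 243, 166, 72, 29, 183, 226, 144, 197, 111, 58, 212, 129, 43, 126, 92, 9, 163, 246, 24, 77, 231, 178, 48, 101, 207, 154, 116, 33, 139, 222, 252, 169, 3, 86, 184, 237, 71, 18, 96, 53, 159, 202, 36, 113, 219, 142, 172, 249, 83, 6, 232, 189, 23, 66, 128, 213, 127, 42,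 196, 145, 59, 110, 76, 25, 179, 230, 8, 93, 247, 162, 208, 133, 47, 122, 148, 193, 107, 62, 28, 73, 227, 182, 88, 13, 167, 242, 112, 37, 143, 218, 52, 97, 203, 158, 188, 233, 67, 22, 248, 173, 7, 82, 32, 117, 223, 138, 100, 49, 155, 206, 236, 185, 19, 70, 168, 253, 87, 2]
def tbl3 : List Nat := [0, 3, 2, 1, 15, 12, 13, 14, 10, 9, 8, 11, 5, 6, 7, 4, 51, 48, 49, 50, 60, 63, 62, 61, 57, 58, 59, 56, 54, 53, 52, 55, 34, 33, 32, 35, 45, 46, 47, 44, 40, 43, 42, 41, 39, 36, 37, 38, 17, 18, 19, 16, 30, 29, 28, 31, 27, 24, 25, 26, 20, 23, 22, 21, 255, 252, 253, 254, 240, 243, 242, 241, 245, 246, 247, 244, 250, 249, 248, 251, 204, 207, 206, 205, 195, 192, 193, 194, 198, 197, 196, 199, 201, 202, 203, 200, 221, 222, 223, 220, 210, 209, 208, 211, 215, 212, 213, 214, 216, 219, 218, 217, 238, 237, 236, 239, 225, 226, 227, 224, 228, 231, 230, 229, 235, 232, 233, 234, 170, 169, 168, 171, 165, 166, 167, 164,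 160, 163, 162, 161, 175, 172, 173, 174, 153, 154, 155, 152, 150, 149, 148, 151, 147, 144, 145, 146, 156, 159, 158, 157, 136, 139, 138, 137, 135, 132, 133, 134, 130, 129, 128, 131, 141, 142, 143, 140, 187, 184, 185, 186, 180, 183, 182, 181, 177, 178, 179, 176, 190, 189, 188, 191, 85, 86, 87, 84, 90, 89, 88, 91, 95, 92, 93, 94, 80, 83, 82, 81, 102, 101, 100, 103, 105, 106, 107, 104, 108, 111, 110, 109, 99, 96, 97, 98, 119, 116, 117, 118, 120, 123, 122, 121, 125, 126, 127, 124, 114, 113, 112, 115, 68, 71, 70, 69, 75, 72, 73, 74, 78, 77, 76, 79, 65, 66, 67, 64]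
def tbl4 : List Nat := [0, 170, 255, 85, 34, 136, 221, 119, 51, 153, 204, 102, 17, 187, 238, 68, 10, 160, 245, 95, 40, 130, 215, 125, 57, 147, 198, 108, 27, 177, 228, 78, 15, 165, 240, 90, 45, 135, 210, 120, 60, 150, 195, 105, 30, 180, 225, 75, 5, 175, 250, 80, 39, 141, 216, 114, 54, 156, 201, 99, 20, 190, 235, 65, 2, 168, 253, 87, 32, 138, 223, 117, 49, 155, 206, 100, 19, 185, 236, 70, 8, 162, 247, 93, 42, 128, 213, 127, 59, 145, 196, 110, 25, 179, 230, 76, 13, 167, 242, 88, 47, 133, 208, 122, 62, 148, 193, 107, 28, 182, 227, 73, 7, 173, 248, 82, 37, 143, 218, 112, 52, 158, 203, 97, 22, 188, 233, 67, 3, 169, 252, 86, 33, 139, 222, 116, 48, 154, 207, 101, 18, 184, 237, 71, 9, 163, 246, 92, 43, 129, 212, 126, 58, 144, 197, 111, 24, 178, 231, 77, 12, 166, 243, 89, 46, 132, 209, 123, 63, 149, 192, 106, 29, 183, 226, 72, 6, 172, 249, 83, 36, 142, 219, 113, 53, 159, 202, 96, 23, 189, 232, 66, 1, 171, 254, 84,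 35, 137, 220, 118, 50, 152, 205, 103, 16, 186, 239, 69, 11, 161, 244, 94, 41, 131, 214, 124, 56, 146, 199, 109, 26, 176, 229, 79, 14, 164, 241, 91, 44, 134, 211, 121, 61, 151, 194, 104, 31, 181, 224, 74, 4, 174, 251, 81, 38, 140, 217, 115, 55, 157, 200, 98, 21, 191, 234, 64]
def tbl5 : List Nat := [0, 192, 64, 128, 240, 48, 176, 112, 80, 144, 16, 208, 160, 96, 224, 32, 204, 12, 140, 76, 60, 252, 124, 188, 156, 92, 220, 28, 108, 172, 44, 236, 68, 132, 4, 196, 180, 116, 244, 52, 20, 212, 84, 148, 228, 36, 164, 100, 136, 72, 200, 8, 120, 184, 56, 248, 216, 24, 152, 88, 40, 232, 104, 168, 255, 63, 191, 127, 15, 207, 79, 143, 175, 111, 239, 47, 95, 159, 31, 223, 51, 243, 115, 179, 195, 3, 131, 67, 99, 163, 35, 227, 147, 83, 211, 19, 187, 123, 251, 59, 75, 139, 11, 203, 235, 43, 171, 107, 27, 219, 91, 155, 119, 183, 55, 247, 135, 71, 199, 7, 39, 231, 103, 167, 215, 23, 151, 87, 85, 149, 21, 213, 165, 101, 229, 37,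 5, 197, 69, 133, 245, 53, 181, 117, 153, 89, 217, 25, 105, 169, 41, 233, 201, 9, 137, 73, 57, 249, 121, 185, 17, 209, 81, 145, 225, 33, 161, 97, 65, 129, 1, 193, 177, 113, 241, 49, 221, 29, 157, 93, 45, 237, 109, 173, 141, 77, 205, 13, 125, 189, 61, 253, 170, 106, 234, 42, 90, 154, 26, 218, 250, 58, 186, 122, 10, 202, 74, 138, 102, 166, 38, 230, 150, 86, 214, 22, 54, 246, 118, 182, 198, 6, 134, 70, 238, 46, 174, 110, 30, 222, 94, 158, 190, 126, 254, 62, 78, 142, 14, 206, 34, 226, 98, 162, 210, 18, 146, 82, 114, 178, 50, 242, 130, 66, 194, 2]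

def TBL : Fin 6 → List Nat := ![tbl0, tbl1, tbl2, tbl3, tbl4, tbl5]

/-! ### Facts proved by `decide` -/

theorem L_inv : ∀ k : Fin 6, ∀ x : V2,
    app (LF k).1 (app (LF k).2 x) = x ∧ app (LF k).2 (app (LF k).1 x) = x := by decide
theorem L_covers : ∀ v0 v1 : V2, v0 ≠ 0 → v1 ≠ 0 → v0 ≠ v1 →
    ∃ k : Fin 6, (LF k).1 0 = v0 ∧ (LF k).1 1 = v1 := by decide
theorem dec_enc : ∀ c : C2, dec (enc c) = c := by decide
theorem enc_lt : ∀ c : C2, enc c < 256 := by decide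
theorem enc_dec : ∀ n : Fin 256, enc (dec n.val) = n.val := by decide
theorem tbl_act : ∀ k : Fin 6, ∀ c : C2,
    (TBL k).getD (enc c) 0 = enc (act (LF k).1 (LF k).2 c) := by decide
theorem std_ne_zero : ∀ i : Fin 2, std i ≠ 0 := by decide
theorem std_ne : std 0 ≠ std 1 := by decide

/-! ### Basic linear algebra lemmas -/

theorem decomp (x : V2) : x = x 0 • std 0 + x 1 • std 1 := by
  funext j; fin_cases j <;> simp [std]

theorem bil_apply (B : T2) (w0 w1 z0 z1 u v : V2) :
    B (u 0 • w0 + u 1 • w1) (v 0 • z0 + v 1 • z1) =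
      (u 0 * v 0) • B w0 z0 + (u 0 * v 1) • B w0 z1 +
      (u 1 * v 0) • B w1 z0 + (u 1 * v 1) • B w1 z1 := by
  simp only [map_add, map_smul, LinearMap.add_apply, LinearMap.smul_apply, smul_add,
    smul_smul]
  module

theorem B_eq_bil (B : T2) (u v : V2) : B u v = bil (Ef B) u v := by
  conv_lhs => rw [decomp u, decomp v]
  rw [bil_apply]
  rfl

theorem map_bil (F : V2 →ₗ[ZMod 2] V2) (c : C2) (u v : V2) :
    F (bil c u v) = bil (fun i j => F (c i j)) u v := by
  simp [bil, map_add, map_smul]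

def appL (v : Fin 2 → V2) : V2 →ₗ[ZMod 2] V2 where
  toFun := app v
  map_add' x y := by
    simp only [app, Pi.add_apply, add_smul]
    module
  map_smul' r x := by
    simp only [app, Pi.smul_apply, smul_eq_mul, RingHom.id_apply, smul_add, smul_smul]

def Mf (c : C2) : T2 :=
  LinearMap.mk₂ (ZMod 2) (bil c)
    (fun x x' y => by
      simp only [bil, Pi.add_apply, add_mul, add_smul]; module)
    (fun r x y => by
      simp only [bil, Pi.smul_apply, smul_eq_mul, mul_assoc, mul_smul, smul_add])
    (fun x y y' => by
      simp only [bil, Pi.add_apply, mul_add, add_smul]; module)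
    (fun r x y => by
      simp only [bil, Pi.smul_apply, smul_eq_mul, mul_left_comm, mul_smul, smul_add])

theorem Mf_apply (c : C2) (u v : V2) : Mf c u v = bil c u v := rfl

theorem Ef_Mf (c : C2) : Ef (Mf c) = c := by
  funext i j
  have : bil c (std i) (std j) = c i j := by
    fin_cases i <;> fin_cases j <;> simp [bil, std]
  simpa [Ef, Mf_apply] using this

theorem Mf_Ef (μ : T2) : Mf (Ef μ) = μ := by
  apply LinearMap.ext; intro x; apply LinearMap.ext; intro y
  rw [Mf_apply, ← B_eq_bil]

/-! ### The orbit relation -/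

def R' (μ μ' : T2) : Prop :=
  ∃ f : V2 ≃ₗ[ZMod 2] V2, ∀ x y, f (μ x y) = μ' (f x) (f y)

theorem R'_refl (μ : T2) : R' μ μ := ⟨LinearEquiv.refl _ _, fun _ _ => rfl⟩

theorem R'_symm {μ μ' : T2} (h : R' μ μ') : R' μ' μ := by
  obtain ⟨f, hf⟩ := h
  refine ⟨f.symm, fun x y => ?_⟩
  have h2 := hf (f.symm x) (f.symm y)
  rw [f.apply_symm_apply, f.apply_symm_apply] at h2
  rw [← h2, f.symm_apply_apply]

theorem R'_trans {μ μ' μ'' : T2} (h : R' μ μ') (h' : R' μ' μ'') : R' μ μ'' := by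
  obtain ⟨f, hf⟩ := h
  obtain ⟨g, hg⟩ := h'
  exact ⟨f.trans g, fun x y => by
    simp only [LinearEquiv.trans_apply, hf, hg]⟩

theorem mem_orbitOf {μ μ' : T2} : μ' ∈ orbitOf μ ↔ R' μ μ' := Iff.rfl

theorem orbit_eq_iff {μ μ' : T2} : orbitOf μ = orbitOf μ' ↔ R' μ μ' := by
  constructor
  · intro h
    have : μ' ∈ orbitOf μ' := R'_refl μ'
    rw [← h] at this
    exact this
  · intro h
    ext ν
    exact ⟨fun hν => R'_trans (R'_symm h) hν, fun hν => R'_trans h hν⟩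

/-! ### Transfer to the concrete relation -/

def Rc (c c' : C2) : Prop := ∃ k : Fin 6, c' = act (LF k).1 (LF k).2 c

theorem appL_apply (v : Fin 2 → V2) (x : V2) : appL v x = app v x := rfl

theorem R'_iff_Rc (μ μ' : T2) : R' μ μ' ↔ Rc (Ef μ) (Ef μ') := by
  constructor
  · rintro ⟨f, hf⟩
    have h0 : f (std 0) ≠ 0 := fun h => std_ne_zero 0 (by
      simpa using f.injective (by simpa using h))
    have h1 : f (std 1) ≠ 0 := fun h => std_ne_zero 1 (by
      simpa using f.injective (by simpa using h))
    have h01 : f (std 0) ≠ f (std 1) := fun h => std_ne (f.injective h)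
    obtain ⟨k, hk0, hk1⟩ := L_covers (f (std 0)) (f (std 1)) h0 h1 h01
    have hfp : ∀ x : V2, f x = app (LF k).1 x := by
      intro x
      conv_lhs => rw [decomp x]
      simp [map_add, map_smul, app, hk0, hk1]
    have hfq : ∀ x : V2, (f.symm x : V2) = app (LF k).2 x := by
      intro x
      conv_lhs => rw [← (L_inv k x).1, ← hfp (app (LF k).2 x), f.symm_apply_apply]
    refine ⟨k, ?_⟩
    funext i j
    have : act (LF k).1 (LF k).2 (Ef μ) i j
        = f (μ (f.symm (std i)) (f.symm (std j))) := by
      rw [act, ← hfq, ← hfq, ← B_eq_bil, hfp]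
    rw [this, hf, f.apply_symm_apply, f.apply_symm_apply]
    rfl
  · rintro ⟨k, hc⟩
    have hpq := L_inv k
    refine ⟨LinearEquiv.ofLinear (appL (LF k).1) (appL (LF k).2)
      (LinearMap.ext fun x => (hpq x).1) (LinearMap.ext fun x => (hpq x).2), fun x y => ?_⟩
    set f := LinearEquiv.ofLinear (appL (LF k).1) (appL (LF k).2)
      (LinearMap.ext fun x => (hpq x).1) (LinearMap.ext fun x => (hpq x).2) with hfdef
    have hfp : ∀ z : V2, f z = app (LF k).1 z := fun z => rfl
    have key : ∀ u v : V2, μ' u v = f (μ (app (LF k).2 u) (app (LF k).2 v)) := by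
      intro u v
      have e1 : ∀ i j : Fin 2, Ef μ' i j
          = f (μ (appL (LF k).2 (std i)) (appL (LF k).2 (std j))) := by
        intro i j
        rw [hc]
        show app (LF k).1 (bil (Ef μ) (app (LF k).2 (std i)) (app (LF k).2 (std j))) = _
        rw [← B_eq_bil]
        rfl
      have heq : Ef μ' = fun i j => f (μ (appL (LF k).2 (std i)) (appL (LF k).2 (std j))) :=
        funext fun i => funext fun j => e1 i j
      have e3 : bil (fun i j => f (μ (appL (LF k).2 (std i)) (appL (LF k).2 (std j)))) u v
          = f (bil (fun i j => μ (appL (LF k).2 (std i)) (appL (LF k).2 (std j))) u v) := by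
        simp [bil, map_add, map_smul]
      rw [B_eq_bil μ', heq, e3]
      apply congrArg
      have hq : ∀ w : V2, app (LF k).2 w
          = w 0 • appL (LF k).2 (std 0) + w 1 • appL (LF k).2 (std 1) := by
        intro w
        conv_lhs => rw [show app (LF k).2 w = appL (LF k).2 w from rfl, decomp w]
        simp [map_add, map_smul]
      rw [hq u, hq v, bil_apply]
      rfl
    have hxy := key (f x) (f y)
    rw [show app (LF k).2 (f x) = x from (hpq x).2,
        show app (LF k).2 (f y) = y from (hpq y).2] at hxy
    exact hxy.symm

/-! ### The `Fin 256` model -/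

def RN (a b : Fin 256) : Prop := ∃ k : Fin 6, (TBL k).getD a.val 0 = b.val
instance RNdec : ∀ a b, Decidable (RN a b) := fun a b => by unfold RN; infer_instance

def encF : T2 ≃ Fin 256 where
  toFun μ := ⟨enc (Ef μ), enc_lt _⟩
  invFun n := Mf (dec n.val)
  left_inv μ := by simp [dec_enc, Mf_Ef]
  right_inv n := by
    apply Fin.ext
    show enc (Ef (Mf (dec n.val))) = n.val
    rw [Ef_Mf, enc_dec]

theorem Rc_iff_RN (c c' : C2) (h : enc c < 256) (h' : enc c' < 256) :
    Rc c c' ↔ RN ⟨enc c, h⟩ ⟨enc c', h'⟩ := by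
  constructor
  · rintro ⟨k, hc⟩
    exact ⟨k, by rw [tbl_act k c, ← hc]⟩
  · rintro ⟨k, hk⟩
    refine ⟨k, ?_⟩
    have hk' : (TBL k).getD (enc c) 0 = enc c' := hk
    have h2 : enc c' = enc (act (LF k).1 (LF k).2 c) := by rw [← hk', tbl_act]
    calc c' = dec (enc c') := (dec_enc c').symm
    _ = dec (enc (act (LF k).1 (LF k).2 c)) := by rw [h2]
    _ = act (LF k).1 (LF k).2 c := dec_enc _

theorem R'_iff_RN (μ μ' : T2) : R' μ μ' ↔ RN (encF μ) (encF μ') := by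
  rw [R'_iff_Rc]
  exact Rc_iff_RN _ _ (enc_lt _) (enc_lt _)

def setoidN : Setoid (Fin 256) :=
  ⟨RN, by
    have h : ∀ a b : Fin 256, RN a b ↔ R' (encF.symm a) (encF.symm b) := by
      intro a b
      rw [R'_iff_RN, encF.apply_symm_apply, encF.apply_symm_apply]
    constructor
    · intro a; rw [h]; exact R'_refl _
    · intro a b hab; rw [h] at *; exact R'_symm hab
    · intro a b c hab hbc; rw [h] at *; exact R'_trans hab hbc⟩

instance : Fintype (Quotient setoidN) := @Quotient.fintype _ _ setoidN RNdec

theorem card52 : Fintype.card (Quotient setoidN) = 52 := by decide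

/-! ### Main theorem -/

def qmap (μ : T2) : {s : Set T2 // ∃ μ, s = orbitOf μ} := ⟨orbitOf μ, ⟨μ, rfl⟩⟩

theorem qmap_surj : Function.Surjective qmap := by
  rintro ⟨s, ⟨μ, hμ⟩⟩
  exact ⟨μ, Subtype.ext hμ.symm⟩

/-- There are exactly 52 isomorphism classes of 2-dimensional `F₂`-algebras, i.e.
52 orbits of the `GL(2,F₂)`-action on the 256 bilinear multiplications on `F₂²`. -/
theorem stmt_19 :
    Nat.card {s : Set ((Fin 2 → ZMod 2) →ₗ[ZMod 2] (Fin 2 → ZMod 2) →ₗ[ZMod 2]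
        (Fin 2 → ZMod 2)) // ∃ μ, s = orbitOf μ} = 52 := by
  have e1 : {s : Set T2 // ∃ μ, s = orbitOf μ} ≃ Quotient (Setoid.ker qmap) :=
    (Setoid.quotientKerEquivOfSurjective qmap qmap_surj).symm
  have e2 : Quotient (Setoid.ker qmap) ≃ Quotient setoidN := by
    refine Quotient.congr encF ?_
    intro μ μ'
    show qmap μ = qmap μ' ↔ RN (encF μ) (encF μ')
    rw [← R'_iff_RN]
    constructor
    · intro h
      exact orbit_eq_iff.mp (congrArg Subtype.val h)
    · intro h
      exact Subtype.ext (orbit_eq_iff.mpr h)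
  rw [Nat.card_congr (e1.trans e2), Nat.card_eq_fintype_card, card52]
end
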